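/- The formal power series 𝔠(t) = ∑_{k≥0} (k+1)^{k-1}/k! · t^k satisfies the functional equation 𝔠 = exp(t·𝔠). -/

import Mathlib

/-!
STATEMENT 13: The formal power series `𝔠(t) = ∑_{k ≥ 0} (k+1)^{k-1}/k! · t^k`
satisfies the functional equation `𝔠 = exp(t·𝔠)`.
-/

section CayleyAux

open Finset Polynomial


lemma fd : ∀ (n : ℕ) (p : Polynomial ℚ), p.degree < n →
    ∑ k ∈ Finset.range (n+1), (-1:ℚ)^k * (n.choose k) * p.eval (k:ℚ) = 0 := by
  intro n
  induction n with
  | zero =>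
    intro p hp
    have hp0 : p = 0 := by
      rw [← Polynomial.degree_eq_bot]
      exact Nat.WithBot.lt_zero_iff.mp (by exact_mod_cast hp)
    simp [hp0]
  | succ n ih =>
    intro p hp
    have hple : p.degree ≤ n := by
      rw [Nat.cast_succ] at hp; exact Order.lt_succ_iff.mp hp
    set q : Polynomial ℚ := p.comp (X + C 1) - p with hq
    have hqev : ∀ x : ℚ, q.eval x = p.eval (x + 1) - p.eval x := by
      intro x; simp [hq, Polynomial.eval_comp]
    have hqdeg : q.degree < n := by
      rcases le_or_gt p.degree 0 with h0 | h0
      · have hc : p = C (p.coeff 0) := Polynomial.eq_C_of_degree_le_zero h0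
        have hz : q = 0 := by rw [hq, hc]; simp
        rw [hz, Polynomial.degree_zero]
        exact_mod_cast WithBot.bot_lt_coe n
      · have hp0 : p ≠ 0 := fun h => by simp [h] at h0
        have hc0 : p.comp (X + C 1) ≠ 0 := by
          intro h
          apply hp0
          apply Polynomial.taylor_injective (1 : ℚ)
          rw [Polynomial.taylor_apply, h, map_zero]
        have hdeq : (p.comp (X + C 1)).degree = p.degree := by
          rw [Polynomial.degree_eq_natDegree hc0, Polynomial.degree_eq_natDegree hp0,
            ← Polynomial.taylor_apply, Polynomial.natDegree_taylor]
        have hnd : (X + C (1:ℚ)).natDegree ≠ 0 := by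
          rw [Polynomial.natDegree_X_add_C]; norm_num
        have hlc : (p.comp (X + C 1)).leadingCoeff = p.leadingCoeff := by
          rw [Polynomial.leadingCoeff_comp hnd, Polynomial.leadingCoeff_X_add_C, one_pow, mul_one]
        have hlt := Polynomial.degree_sub_lt hdeq hc0 hlc
        rw [hdeq] at hlt
        exact lt_of_lt_of_le hlt hple
    have hI := ih q hqdeg
    set A : ℚ := ∑ i ∈ Finset.range (n+1), (-1:ℚ)^i * (n.choose i) * p.eval (i:ℚ) with hA
    set B : ℚ := ∑ i ∈ Finset.range (n+1), (-1:ℚ)^i * (n.choose i) * p.eval ((i:ℚ)+1) with hB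
    have hAB : A - B = 0 := by
      have h' : A - B = -∑ k ∈ Finset.range (n+1), (-1:ℚ)^k * (n.choose k) * q.eval (k:ℚ) := by
        rw [hA, hB, ← Finset.sum_sub_distrib, ← Finset.sum_neg_distrib]
        apply Finset.sum_congr rfl
        intro i _
        rw [hqev]
        ring
      rw [h', hI, neg_zero]
    have hA2 : A = -∑ i ∈ Finset.range n, ((-1:ℚ)^i * (n.choose (i+1)) * p.eval ((i:ℚ)+1)) + p.eval 0 := by
      rw [hA, Finset.sum_range_succ' (fun i => (-1:ℚ)^i * (n.choose i) * p.eval (i:ℚ)),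
        ← Finset.sum_neg_distrib]
      congr 1
      · apply Finset.sum_congr rfl
        intro i _
        push_cast
        ring
      · simp
    have hCterm : ∑ i ∈ Finset.range (n+1), (-1:ℚ)^i * (n.choose (i+1)) * p.eval ((i:ℚ)+1)
        = p.eval 0 - A := by
      rw [Finset.sum_range_succ]
      simp only [Nat.choose_succ_self, Nat.cast_zero, mul_zero, zero_mul, add_zero]
      linarith [hA2]
    have key : ∑ k ∈ Finset.range (n+2), (-1:ℚ)^k * ((n+1).choose k) * p.eval (k:ℚ) = A - B := by
      rw [Finset.sum_range_succ' (fun k => (-1:ℚ)^k * ((n+1).choose k) * p.eval (k:ℚ))]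
      have e1 : ∀ i ∈ Finset.range (n+1), (-1:ℚ)^(i+1) * ((n+1).choose (i+1)) * p.eval ((i+1:ℕ):ℚ)
          = -((-1:ℚ)^i * (n.choose i) * p.eval ((i:ℚ)+1)) - ((-1:ℚ)^i * (n.choose (i+1)) * p.eval ((i:ℚ)+1)) := by
        intro i _
        rw [Nat.choose_succ_succ]
        push_cast
        ring
      rw [Finset.sum_congr rfl e1, Finset.sum_sub_distrib, hCterm]
      simp [hB]
      ring
    rw [key, hAB]

noncomputable def aQ (x : ℚ) (k : ℕ) : ℚ := if k = 0 then 1 else x * (x + k)^(k-1)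

lemma aQ_zero (x : ℚ) : aQ x 0 = 1 := rfl

lemma aQ_succ (x : ℚ) (k : ℕ) : aQ x (k+1) = x * (x + (k+1 : ℕ))^k := by simp [aQ]


lemma Zlem (n : ℕ) (hn : 1 ≤ n) (x : ℚ) :
    ∑ k ∈ Finset.range (n+1), (n.choose k : ℚ) * aQ x k * (-(x + k))^(n-k) = 0 := by
  set p : Polynomial ℚ := C x * (X + C x)^(n-1) with hp
  have hdeg : p.degree < n := by
    have h1 : p.natDegree ≤ n - 1 := by
      refine le_trans (Polynomial.natDegree_mul_le) ?_
      simp [Polynomial.natDegree_pow, Polynomial.natDegree_X_add_C]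
    calc p.degree ≤ p.natDegree := Polynomial.degree_le_natDegree
      _ ≤ ((n-1 : ℕ) : WithBot ℕ) := by exact_mod_cast h1
      _ < (n : WithBot ℕ) := by exact_mod_cast Nat.sub_lt hn one_pos
  have hfd := fd n p hdeg
  have hterm : ∀ k ∈ Finset.range (n+1), (n.choose k : ℚ) * aQ x k * (-(x + k))^(n-k)
      = (-1:ℚ)^n * ((-1:ℚ)^k * (n.choose k) * p.eval (k:ℚ)) := by
    intro k hk
    have hkn : k ≤ n := Nat.lt_succ_iff.mp (Finset.mem_range.mp hk)
    have hev : p.eval (k:ℚ) = x * (x + k)^(n-1) := by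
      simp [hp, add_comm]
    have hsign : (-1:ℚ)^(n-k) = (-1:ℚ)^n * (-1:ℚ)^k := by
      have : n - k + 2*k = n + k := by omega
      have h2 : ((-1:ℚ))^(n-k) * ((-1:ℚ))^(2*k) = (-1:ℚ)^(n+k) := by
        rw [← pow_add, this]
      have h3 : ((-1:ℚ))^(2*k) = 1 := by
        rw [pow_mul]; norm_num
      rw [h3, mul_one] at h2
      rw [h2, pow_add]
    rw [hev, neg_pow, hsign]
    rcases Nat.eq_zero_or_pos k with rfl | hk1
    · have hx : x * x^(n-1) = x^n := by
        rw [← pow_succ']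
        congr 1
        omega
      simp [aQ_zero]
      push_cast
      ring_nf
      exact hx.symm
    · obtain ⟨k', rfl⟩ : ∃ k', k = k' + 1 := ⟨k - 1, by omega⟩
      rw [aQ_succ]
      have hpow : (x + (k'+1:ℕ))^k' * (x + (k'+1:ℕ))^(n-(k'+1)) = (x + (k'+1:ℕ))^(n-1) := by
        rw [← pow_add]
        congr 1
        omega
      push_cast at hpow ⊢
      linear_combination ((n.choose (k'+1) : ℚ) * x * (-1:ℚ)^n * (-1:ℚ)^(k'+1)) * hpow
  rw [Finset.sum_congr rfl hterm, ← Finset.mul_sum, hfd, mul_zero]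

lemma PSlem : ∀ (n : ℕ) (x c : ℚ),
    (∑ k ∈ Finset.range (n+1), C ((n.choose k : ℚ) * aQ x k) * (X + C (c + ((n-k : ℕ):ℚ)))^(n-k) : Polynomial ℚ)
      = (X + C (c + x + n))^n := by
  intro n
  induction n with
  | zero => intro x c; simp [aQ_zero]
  | succ n ih =>
    intro x c
    set L := (∑ k ∈ Finset.range (n+2), C (((n+1).choose k : ℚ) * aQ x k) * (X + C (c + ((n+1-k:ℕ):ℚ)))^(n+1-k)) - (X + C (c + x + ((n+1:ℕ):ℚ)))^(n+1) with hL
    have hd : derivative L = 0 := by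
      rw [hL, map_sub, map_sum]
      have hterm : ∀ k ∈ Finset.range (n+2),
          derivative (C (((n+1).choose k : ℚ) * aQ x k) * (X + C (c + ((n+1-k:ℕ):ℚ)))^(n+1-k))
          = C (((n+1).choose k : ℚ) * aQ x k * ((n+1-k : ℕ):ℚ)) * (X + C (c + ((n+1-k:ℕ):ℚ)))^(n-k) := by
        intro k hk
        rw [Polynomial.derivative_C_mul, Polynomial.derivative_pow, Polynomial.derivative_X_add_C]
        have : (n+1-k) - 1 = n - k := by omega
        rw [this, mul_one, ← mul_assoc, ← Polynomial.C_mul]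
      rw [Finset.sum_congr rfl hterm]
      have hsum : ∑ k ∈ Finset.range (n+2), C (((n+1).choose k : ℚ) * aQ x k * ((n+1-k : ℕ):ℚ)) * (X + C (c + ((n+1-k:ℕ):ℚ)))^(n-k)
          = C (((n+1:ℕ):ℚ)) * ∑ k ∈ Finset.range (n+1), C ((n.choose k : ℚ) * aQ x k) * (X + C ((c+1) + ((n-k:ℕ):ℚ)))^(n-k) := by
        rw [Finset.sum_range_succ]
        simp only [Nat.sub_self, Nat.cast_zero, mul_zero, Polynomial.C_0, zero_mul, add_zero]
        rw [Finset.mul_sum]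
        apply Finset.sum_congr rfl
        intro k hk
        have hkn : k ≤ n := Nat.lt_succ_iff.mp (Finset.mem_range.mp hk)
        have h1 : ((n+1).choose k : ℚ) * ((n+1-k : ℕ):ℚ) = (n.choose k : ℚ) * ((n+1 : ℕ):ℚ) := by
          exact_mod_cast (Nat.choose_mul_succ_eq n k).symm
        have h2 : c + ((n+1-k:ℕ):ℚ) = (c+1) + ((n-k:ℕ):ℚ) := by
          have : ((n+1-k:ℕ):ℚ) = ((n-k:ℕ):ℚ) + 1 := by
            have : n+1-k = (n-k)+1 := by omega
            rw [this]; push_cast; ring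
          rw [this]; ring
        have hcoef : ((n+1).choose k : ℚ) * aQ x k * ((n+1-k : ℕ):ℚ)
            = ((n+1 : ℕ):ℚ) * ((n.choose k : ℚ) * aQ x k) := by
          linear_combination (aQ x k) * h1
        rw [h2, hcoef, Polynomial.C_mul, mul_assoc]
      rw [hsum, ih x (c+1)]
      rw [Polynomial.derivative_pow, Polynomial.derivative_X_add_C]
      have h3 : c + 1 + x + (n:ℚ) = c + x + ((n+1:ℕ):ℚ) := by push_cast; ring
      rw [h3]
      push_cast
      ring
    have hCform : L = C (L.coeff 0) := Polynomial.eq_C_of_derivative_eq_zero hd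
    have hev : L.eval (-(c + x + ((n+1:ℕ):ℚ))) = 0 := by
      rw [hL]
      rw [Polynomial.eval_sub, Polynomial.eval_finset_sum]
      have hterm : ∀ k ∈ Finset.range (n+2),
          Polynomial.eval (-(c + x + ((n+1:ℕ):ℚ))) (C (((n+1).choose k : ℚ) * aQ x k) * (X + C (c + ((n+1-k:ℕ):ℚ)))^(n+1-k))
          = ((n+1).choose k : ℚ) * aQ x k * (-(x + k))^(n+1-k) := by
        intro k hk
        have hkn : k ≤ n+1 := Nat.lt_succ_iff.mp (Finset.mem_range.mp hk)
        simp only [Polynomial.eval_mul, Polynomial.eval_C, Polynomial.eval_pow,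
          Polynomial.eval_add, Polynomial.eval_X]
        have hbase : -(c + x + ((n+1:ℕ):ℚ)) + (c + ((n+1-k:ℕ):ℚ)) = -(x + (k:ℚ)) := by
          rw [Nat.cast_sub hkn]
          push_cast
          ring
        rw [hbase]
      rw [Finset.sum_congr rfl hterm, Zlem (n+1) (by omega) x]
      rw [Polynomial.eval_pow, Polynomial.eval_add, Polynomial.eval_X, Polynomial.eval_C]
      have : -(c + x + ((n+1:ℕ):ℚ)) + (c + x + ((n+1:ℕ):ℚ)) = 0 := by ring
      rw [this, zero_pow (by omega : n+1 ≠ 0), sub_zero]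
    have hL0 : L = 0 := by
      rw [hCform] at hev ⊢
      simp only [Polynomial.eval_C] at hev
      rw [hev, Polynomial.C_0]
    have := sub_eq_zero.mp (hL ▸ hL0)
    exact this

lemma Slem (n : ℕ) (x y : ℚ) :
    ∑ k ∈ Finset.range (n+1), (n.choose k:ℚ) * aQ x k * (y + ((n-k:ℕ):ℚ))^(n-k) = (x + y + (n:ℚ))^n := by
  have h := congrArg (Polynomial.eval y) (PSlem n x 0)
  rw [Polynomial.eval_finset_sum] at h
  simp only [Polynomial.eval_mul, Polynomial.eval_C, Polynomial.eval_pow, Polynomial.eval_add,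
    Polynomial.eval_X, zero_add] at h
  rw [h]
  ring

lemma abel_aux (n : ℕ) (x y : ℚ) :
    ∑ k ∈ Finset.range (n+1), (n.choose k:ℚ) * aQ x k * aQ y (n-k) = aQ (x+y) n := by
  cases n with
  | zero => simp [aQ_zero]
  | succ m =>
    have hS := Slem (m+1) x y
    have hD : ∑ k ∈ Finset.range (m+1), ((m+1).choose k:ℚ) * aQ x k * (((m+1-k:ℕ)):ℚ) * (y + ((m+1-k:ℕ):ℚ))^(m-k)
        = ((m+1:ℕ):ℚ) * (x+y+((m+1:ℕ):ℚ))^m := by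
      have hS2 := Slem m x (y+1)
      have he : x + (y+1) + (m:ℚ) = x + y + ((m+1:ℕ):ℚ) := by push_cast; ring
      rw [he] at hS2
      rw [← hS2, Finset.mul_sum]
      apply Finset.sum_congr rfl
      intro k hk
      have hkm : k ≤ m := Nat.lt_succ_iff.mp (Finset.mem_range.mp hk)
      have h1 : ((m+1).choose k:ℚ) * ((m+1-k:ℕ):ℚ) = ((m.choose k):ℚ) * ((m+1:ℕ):ℚ) := by
        exact_mod_cast (Nat.choose_mul_succ_eq m k).symm
      have h2 : y + ((m+1-k:ℕ):ℚ) = (y+1) + ((m-k:ℕ):ℚ) := by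
        have h3 : m+1-k = (m-k)+1 := by omega
        rw [h3]; push_cast; ring
      rw [h2]
      linear_combination (aQ x k * ((y+1) + ((m-k:ℕ):ℚ))^(m-k)) * h1
    rw [Finset.sum_range_succ] at hS ⊢
    have e : ∀ k ∈ Finset.range (m+1),
        ((m+1).choose k:ℚ) * aQ x k * (y + ((m+1-k:ℕ):ℚ))^(m+1-k)
          = ((m+1).choose k:ℚ) * aQ x k * aQ y (m+1-k)
            + ((m+1).choose k:ℚ) * aQ x k * (((m+1-k:ℕ)):ℚ) * (y + ((m+1-k:ℕ):ℚ))^(m-k) := by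
      intro k hk
      have hkm : k ≤ m := Nat.lt_succ_iff.mp (Finset.mem_range.mp hk)
      have h3 : m+1-k = (m-k)+1 := by omega
      rw [h3, aQ_succ, pow_succ']
      have h4 : (((m-k)+1:ℕ):ℚ) = ((m-k:ℕ):ℚ) + 1 := by push_cast; ring
      rw [h4]
      push_cast
      ring
    rw [Finset.sum_congr rfl e, Finset.sum_add_distrib, hD] at hS
    simp only [Nat.sub_self, aQ_zero, mul_one, Nat.choose_self, Nat.cast_one, one_mul] at hS ⊢
    have h5 : aQ (x+y) (m+1) = (x+y) * (x+y+((m+1:ℕ):ℚ))^m := by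
      rw [aQ_succ]
    have h6 : (x+y+((m+1:ℕ):ℚ))^(m+1) = (x+y+((m+1:ℕ):ℚ)) * (x+y+((m+1:ℕ):ℚ))^m := by
      rw [pow_succ']
    rw [h5]
    push_cast at hS h6 ⊢
    linarith [hS, h6]

lemma key_id (N : ℕ) :
    ∑ i ∈ Finset.range (N+1), (((N+1).choose (i+1) : ℚ) * aQ ((i+1:ℕ):ℚ) (N-i)) = aQ 1 (N+1) := by
  rw [aQ_succ, one_mul, Finset.sum_range_succ]
  have hlast : (((N+1).choose (N+1) : ℚ)) * aQ ((N+1:ℕ):ℚ) (N-N) = 1 := by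
    rw [Nat.sub_self, aQ_zero, Nat.choose_self]
    norm_num
  rw [hlast]
  have hterm : ∀ i ∈ Finset.range N,
      (((N+1).choose (i+1) : ℚ) * aQ ((i+1:ℕ):ℚ) (N-i))
      = ((N+1:ℕ):ℚ) * ((N.choose i : ℚ) * ((N+1:ℕ):ℚ)^(N-1-i)) := by
    intro i hi
    have hiN : i < N := Finset.mem_range.mp hi
    have h1 : N - i = (N-1-i)+1 := by omega
    rw [h1, aQ_succ]
    have h2 : (((i+1:ℕ)):ℚ) + ((N-1-i+1:ℕ):ℚ) = ((N+1:ℕ):ℚ) := by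
      have : (i+1) + (N-1-i+1) = N+1 := by omega
      exact_mod_cast congrArg (fun t : ℕ => (t:ℚ)) this
    rw [h2]
    have h3 : ((N+1:ℕ):ℚ) * (N.choose i : ℚ) = (((N+1).choose (i+1) : ℚ)) * ((i+1:ℕ):ℚ) := by
      exact_mod_cast Nat.add_one_mul_choose_eq N i
    linear_combination (-(((N+1:ℕ):ℚ))^(N-1-i)) * h3
  rw [Finset.sum_congr rfl hterm, ← Finset.mul_sum]
  have hrefl : ∑ i ∈ Finset.range N, ((N.choose i : ℚ) * ((N+1:ℕ):ℚ)^(N-1-i))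
      = ∑ j ∈ Finset.range N, ((N.choose (j+1) : ℚ) * ((N+1:ℕ):ℚ)^j) := by
    have h4 := Finset.sum_range_reflect (fun t => ((N.choose (N-1-t) : ℚ)) * ((N+1:ℕ):ℚ)^t) N
    have h5 : ∀ i ∈ Finset.range N, ((N.choose i : ℚ) * ((N+1:ℕ):ℚ)^(N-1-i))
        = (fun t => ((N.choose (N-1-t) : ℚ)) * ((N+1:ℕ):ℚ)^t) (N-1-i) := by
      intro i hi
      have hiN : i < N := Finset.mem_range.mp hi
      have hii : N - 1 - (N-1-i) = i := by omega
      simp only [hii]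
    rw [Finset.sum_congr rfl h5, h4]
    apply Finset.sum_congr rfl
    intro j hj
    have hjN : j < N := Finset.mem_range.mp hj
    congr 2
    have : N - 1 - j = N - (j+1) := by omega
    rw [this, Nat.choose_symm (by omega)]
  rw [hrefl]
  have hbin : ((N+1:ℕ):ℚ) + 1 = (1 + ((N+1:ℕ):ℚ)) := by ring
  have hpow := add_pow ((N+1:ℕ):ℚ) 1 N
  rw [Finset.sum_range_succ' (fun k => ((N+1:ℕ):ℚ)^k * 1^(N-k) * (N.choose k : ℚ))] at hpow
  simp only [one_pow, mul_one, pow_zero, one_mul] at hpow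
  have hmul : ((N+1:ℕ):ℚ) * ∑ j ∈ Finset.range N, ((N.choose (j+1) : ℚ) * ((N+1:ℕ):ℚ)^j)
      = ∑ j ∈ Finset.range N, (((N+1:ℕ):ℚ)^(j+1) * (N.choose (j+1) : ℚ)) := by
    rw [Finset.mul_sum]
    apply Finset.sum_congr rfl
    intro j _
    rw [pow_succ']
    ring
  rw [hmul]
  have : (1 + ((N+1:ℕ):ℚ)) = ((N+1:ℕ):ℚ) + 1 := by ring
  rw [this, hpow]
  simp


end CayleyAux

open PowerSeries

/-- The formal exponential `exp f = ∑_m f^m / m!`, defined coefficientwise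
(valid for `f` with zero constant term). -/
noncomputable def psExp (f : PowerSeries ℚ) : PowerSeries ℚ :=
  PowerSeries.mk fun n =>
    ∑ m ∈ Finset.range (n + 1),
      ((m.factorial : ℚ)⁻¹) * PowerSeries.coeff n (f ^ m)

/-- The series `𝔠 = ∑_{k ≥ 0} (k+1)^{k-1}/k! t^k` (with `(k+1)^{k-1}` read as the
rational number `(k+1)^{k-1}`, so `c_0 = 1`). -/
noncomputable def cayleySeries : PowerSeries ℚ :=
  PowerSeries.mk fun k => ((k : ℚ) + 1) ^ ((k : ℤ) - 1) / (k.factorial : ℚ)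

lemma coeff_cayley (k : ℕ) : PowerSeries.coeff k cayleySeries = aQ 1 k / (k.factorial : ℚ) := by
  rw [cayleySeries, PowerSeries.coeff_mk]
  cases k with
  | zero => simp [aQ_zero]
  | succ j =>
    have h1 : ((j+1 : ℕ):ℤ) - 1 = (j : ℤ) := by push_cast; ring
    rw [h1, aQ_succ, zpow_natCast]
    push_cast
    ring_nf

lemma coeff_pow : ∀ (m : ℕ), 1 ≤ m → ∀ (n : ℕ),
    PowerSeries.coeff n (cayleySeries ^ m) = aQ (m:ℚ) n / (n.factorial : ℚ) := by
  intro m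
  induction m with
  | zero => omega
  | succ m ih =>
    intro hm n
    rcases Nat.eq_zero_or_pos m with rfl | hm1
    · rw [pow_one, coeff_cayley]
      norm_num
    · rw [pow_succ, PowerSeries.coeff_mul,
        Finset.Nat.sum_antidiagonal_eq_sum_range_succ_mk]
      have hterm : ∀ k ∈ Finset.range (n+1),
          PowerSeries.coeff k (cayleySeries ^ m) * PowerSeries.coeff (n-k) cayleySeries
          = ((n.factorial : ℚ))⁻¹ * ((n.choose k : ℚ) * aQ (m:ℚ) k * aQ 1 (n-k)) := by
        intro k hk
        have hkn : k ≤ n := Nat.lt_succ_iff.mp (Finset.mem_range.mp hk)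
        rw [ih hm1 k, coeff_cayley]
        rw [Nat.cast_choose ℚ hkn]
        have f1 : (k.factorial : ℚ) ≠ 0 := by exact_mod_cast k.factorial_ne_zero
        have f2 : ((n-k).factorial : ℚ) ≠ 0 := by exact_mod_cast (n-k).factorial_ne_zero
        have f3 : (n.factorial : ℚ) ≠ 0 := by exact_mod_cast n.factorial_ne_zero
        field_simp
      rw [Finset.sum_congr rfl hterm, ← Finset.mul_sum, abel_aux n (m:ℚ) 1]
      have : (m:ℚ) + 1 = ((m+1:ℕ):ℚ) := by push_cast; ring
      rw [this]
      ring


theorem cayleySeries_eq_exp_X_mul_self :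
    cayleySeries = psExp (PowerSeries.X * cayleySeries) := by
  ext n
  rw [psExp, PowerSeries.coeff_mk, coeff_cayley]
  have hterm : ∀ m ∈ Finset.range (n+1),
      ((m.factorial : ℚ)⁻¹) * PowerSeries.coeff n ((PowerSeries.X * cayleySeries) ^ m)
      = ((m.factorial : ℚ)⁻¹) * PowerSeries.coeff (n-m) (cayleySeries ^ m) := by
    intro m hm
    have hmn : m ≤ n := Nat.lt_succ_iff.mp (Finset.mem_range.mp hm)
    congr 1
    rw [mul_pow]
    have hnm : n - m + m = n := by omega
    conv_lhs => rw [← hnm]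
    exact PowerSeries.coeff_X_pow_mul _ _ _
  rw [Finset.sum_congr rfl hterm]
  cases n with
  | zero => simp [aQ_zero]
  | succ N =>
    rw [Finset.sum_range_succ' (fun m => ((m.factorial : ℚ)⁻¹) * PowerSeries.coeff (N+1-m) (cayleySeries ^ m))]
    have h0 : ((Nat.factorial 0 : ℚ))⁻¹ * PowerSeries.coeff (N+1-0) (cayleySeries ^ 0) = 0 := by
      simp [PowerSeries.coeff_one]
    rw [h0, add_zero]
    have hterm2 : ∀ i ∈ Finset.range (N+1),
        (((i+1).factorial : ℚ))⁻¹ * PowerSeries.coeff (N+1-(i+1)) (cayleySeries ^ (i+1))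
        = ((N+1).factorial : ℚ)⁻¹ * (((N+1).choose (i+1) : ℚ) * aQ ((i+1:ℕ):ℚ) (N-i)) := by
      intro i hi
      have hiN : i ≤ N := Nat.lt_succ_iff.mp (Finset.mem_range.mp hi)
      have hs : N+1-(i+1) = N-i := by omega
      rw [hs, coeff_pow (i+1) (by omega)]
      rw [Nat.cast_choose ℚ (by omega : i+1 ≤ N+1)]
      have hs2 : N+1-(i+1) = N-i := by omega
      rw [hs2]
      have f1 : (((i+1).factorial : ℚ)) ≠ 0 := by exact_mod_cast (i+1).factorial_ne_zero
      have f2 : ((N-i).factorial : ℚ) ≠ 0 := by exact_mod_cast (N-i).factorial_ne_zero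
      have f3 : (((N+1).factorial : ℚ)) ≠ 0 := by exact_mod_cast (N+1).factorial_ne_zero
      field_simp
      try ring
    rw [Finset.sum_congr rfl hterm2, ← Finset.mul_sum]
    -- now the scalar identity
    have key := key_id N
    rw [key]
    rw [div_eq_mul_inv, mul_comm]
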